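/- arXiv:1808.00515 — 3 statements merged into one kernel-verified Lean document; each statement's English description precedes it below -/
import Mathlib

section
/- Let M be a martingale with continuous paths on [0,T] with E[sup_{t ≤ T} |M_t|] < ∞, let M*_t = max_{r ≤ t} M_r be its running maximum, let P̄ ∈ ℝ, and set P_t = M_t − (M*_t − P̄)⁺. Then for all 0 ≤ t ≤ s ≤ T, almost surely E[P_s | F_t] = P_t − E[(M*_s − max(P̄, M*_t))⁺ | F_t]. -/
open MeasureTheory

noncomputable section

/-- The running maximum `M*_t(ω) = max_{r ≤ t} M_r(ω)` over `[0,t]`. -/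
def runMax {Ω : Type*} (M : ℝ → Ω → ℝ) (t : ℝ) (ω : Ω) : ℝ :=
  sSup ((fun r => M r ω) '' Set.Icc 0 t)

/-- The capped price `P_t = M_t − (M*_t − P̄)⁺`. -/
def cappedPrice {Ω : Type*} (Pbar : ℝ) (M : ℝ → Ω → ℝ) (t : ℝ) (ω : Ω) : ℝ :=
  M t ω - max (runMax M t ω - Pbar) 0

lemma csSup_image_eq_of_dense {f : ℝ → ℝ} {s D : Set ℝ} (hDne : D.Nonempty)
    (hcl : closure D = s) (hf : ContinuousOn f s) (hb : BddAbove (f '' s)) :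
    sSup (f '' s) = sSup (f '' D) := by
  have hDs : D ⊆ s := hcl ▸ subset_closure
  have hne : (f '' s).Nonempty := (hDne.mono hDs).image f
  refine le_antisymm ?_ (csSup_le_csSup hb (hDne.image f) (Set.image_mono hDs))
  refine csSup_le hne ?_
  rintro x ⟨r, hr, rfl⟩
  have h1 : f r ∈ closure (f '' D) := by
    have : f '' s ⊆ closure (f '' D) := by
      rw [← hcl]
      exact (hcl ▸ hf : ContinuousOn f (closure D)).image_closure
    exact this ⟨r, hr, rfl⟩
  have h2 : sSup (f '' D) ∈ upperBounds (closure (f '' D)) := by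
    rw [upperBounds_closure]
    exact fun y hy => le_csSup (hb.mono (Set.image_mono hDs)) hy
  exact h2 h1

lemma closure_ratD {u : ℝ} (hu : 0 ≤ u) :
    closure (insert u (Set.Icc 0 u ∩ Set.range ((↑) : ℚ → ℝ))) = Set.Icc 0 u := by
  set D := insert u (Set.Icc 0 u ∩ Set.range ((↑) : ℚ → ℝ)) with hD
  have hDsub : D ⊆ Set.Icc 0 u := by
    rintro x (rfl | hx)
    · exact ⟨hu, le_rfl⟩
    · exact hx.1
  refine le_antisymm (isClosed_Icc.closure_subset_iff.2 hDsub) ?_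
  rcases eq_or_lt_of_le hu with rfl | hu'
  · intro x hx
    have : x = 0 := le_antisymm hx.2 hx.1
    subst this
    exact subset_closure (Or.inl rfl)
  · have h1 : Set.Ioo 0 u ⊆ closure (Set.Ioo 0 u ∩ Set.range ((↑) : ℚ → ℝ)) :=
      Dense.open_subset_closure_inter Rat.denseRange_cast isOpen_Ioo
    have h2 : Set.Ioo 0 u ∩ Set.range ((↑) : ℚ → ℝ) ⊆ D := fun x hx =>
      Or.inr ⟨Set.Ioo_subset_Icc_self hx.1, hx.2⟩
    calc Set.Icc 0 u = closure (Set.Ioo 0 u) := (closure_Ioo hu'.ne).symm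
      _ ⊆ closure (closure (Set.Ioo 0 u ∩ Set.range ((↑) : ℚ → ℝ))) := closure_mono h1
      _ ⊆ closure D := by rw [closure_closure]; exact closure_mono h2

lemma runMax_measurable {Ω : Type*} {m0 : MeasurableSpace Ω} (ℱ : Filtration ℝ m0)
    {M : ℝ → Ω → ℝ} (hAdp : Adapted ℱ M) {T : ℝ}
    (hMcont : ∀ ω, ContinuousOn (fun t => M t ω) (Set.Icc 0 T))
    {u : ℝ} (hu : 0 ≤ u) (huT : u ≤ T) :
    Measurable[ℱ u] (runMax M u) := by
  set D := insert u (Set.Icc 0 u ∩ Set.range ((↑) : ℚ → ℝ)) with hD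
  have hDcnt : D.Countable :=
    ((Set.countable_range _).mono Set.inter_subset_right).insert u
  have hDsub : D ⊆ Set.Icc 0 u := by
    rintro x (rfl | hx)
    · exact ⟨hu, le_rfl⟩
    · exact hx.1
  have : runMax M u = fun ω => ⨆ x : D, M x ω := by
    funext ω
    have h1 : sSup ((fun r => M r ω) '' Set.Icc 0 u) = sSup ((fun r => M r ω) '' D) :=
      csSup_image_eq_of_dense ⟨u, Or.inl rfl⟩ (closure_ratD hu)
        ((hMcont ω).mono (Set.Icc_subset_Icc le_rfl huT))
        (isCompact_Icc.bddAbove_image ((hMcont ω).mono (Set.Icc_subset_Icc le_rfl huT)))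
    rw [runMax, h1, Set.image_eq_range]
    rfl
  rw [this]
  haveI : Countable D := hDcnt.to_subtype
  exact Measurable.iSup fun x =>
    ((hAdp x).mono (ℱ.mono (hDsub x.2).2) le_rfl)

lemma runMax_abs_le {Ω : Type*} {M : ℝ → Ω → ℝ} {T : ℝ}
    (hMcont : ∀ ω, ContinuousOn (fun t => M t ω) (Set.Icc 0 T))
    {u : ℝ} (hu : 0 ≤ u) (huT : u ≤ T) (ω : Ω) :
    |runMax M u ω| ≤ sSup ((fun t => |M t ω|) '' Set.Icc 0 T) := by
  have hsub : Set.Icc 0 u ⊆ Set.Icc 0 T := Set.Icc_subset_Icc le_rfl huT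
  have habs : ContinuousOn (fun t => |M t ω|) (Set.Icc 0 T) := (hMcont ω).abs
  have hbA : BddAbove ((fun t => |M t ω|) '' Set.Icc 0 T) :=
    isCompact_Icc.bddAbove_image habs
  have hS : ∀ r ∈ Set.Icc 0 u, |M r ω| ≤ sSup ((fun t => |M t ω|) '' Set.Icc 0 T) :=
    fun r hr => le_csSup hbA ⟨r, hsub hr, rfl⟩
  have h0u : (0:ℝ) ∈ Set.Icc 0 u := ⟨le_rfl, hu⟩
  have hbu : BddAbove ((fun r => M r ω) '' Set.Icc 0 u) :=
    isCompact_Icc.bddAbove_image ((hMcont ω).mono hsub)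
  rw [abs_le]
  constructor
  · have h1 : M 0 ω ≤ runMax M u ω := le_csSup hbu ⟨0, h0u, rfl⟩
    have h2 := hS 0 h0u
    have := neg_abs_le (M 0 ω)
    linarith
  · refine csSup_le ((Set.nonempty_Icc.2 hu).image _) ?_
    rintro x ⟨r, hr, rfl⟩
    exact (le_abs_self _).trans (hS r hr)

lemma max_sub_decomp {a b c : ℝ} (hba : b ≤ a) :
    max (a - c) 0 = max (b - c) 0 + max (a - max c b) 0 := by
  rcases le_total b c with h | h
  · rw [max_eq_left h, max_eq_right (by linarith : b - c ≤ 0), zero_add]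
  · rw [max_eq_right h, max_eq_left (by linarith : (0:ℝ) ≤ b - c),
      max_eq_left (by linarith : (0:ℝ) ≤ a - c), max_eq_left (by linarith : (0:ℝ) ≤ a - b)]
    ring

/-- for a continuous martingale `M` with `E[sup_{t≤T}|M_t|] < ∞` and the
capped price `P_t = M_t − (M*_t − P̄)⁺`, for all `0 ≤ t ≤ s ≤ T`, almost surely
`E[P_s | F_t] = P_t − E[(M*_s − max(P̄, M*_t))⁺ | F_t]`. -/
theorem cappedPrice_condexp
    {Ω : Type*} {m0 : MeasurableSpace Ω} {μ : Measure Ω} [IsProbabilityMeasure μ]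
    (ℱ : MeasureTheory.Filtration ℝ m0) (T Pbar : ℝ) (hT : 0 < T)
    (M : ℝ → Ω → ℝ) (hM : Martingale M ℱ μ)
    (hMcont : ∀ ω, ContinuousOn (fun t => M t ω) (Set.Icc 0 T))
    (hMint : Integrable (fun ω => sSup ((fun t => |M t ω|) '' Set.Icc 0 T)) μ)
    (t s : ℝ) (ht : 0 ≤ t) (hts : t ≤ s) (hsT : s ≤ T) :
    μ[fun ω => cappedPrice Pbar M s ω | ℱ t]
      =ᵐ[μ] fun ω => cappedPrice Pbar M t ω
        - (μ[fun ω' => max (runMax M s ω' - max Pbar (runMax M t ω')) 0 | ℱ t]) ω := by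
  have h0s : 0 ≤ s := ht.trans hts
  have htT : t ≤ T := hts.trans hsT
  set S : Ω → ℝ := fun ω => sSup ((fun r => |M r ω|) '' Set.Icc 0 T) with hSdef
  have habs_t : ∀ ω, |runMax M t ω| ≤ S ω := runMax_abs_le hMcont ht htT
  have habs_s : ∀ ω, |runMax M s ω| ≤ S ω := runMax_abs_le hMcont h0s hsT
  have hSnn : ∀ ω, 0 ≤ S ω := fun ω => (abs_nonneg _).trans (habs_t ω)
  have hmono : ∀ ω, runMax M t ω ≤ runMax M s ω := fun ω =>
    csSup_le_csSup
      (isCompact_Icc.bddAbove_image ((hMcont ω).mono (Set.Icc_subset_Icc le_rfl hsT)))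
      ((Set.nonempty_Icc.2 ht).image _)
      (Set.image_mono (Set.Icc_subset_Icc le_rfl hts))
  set f : Ω → ℝ := fun ω => max (runMax M t ω - Pbar) 0 with hfdef
  set g : Ω → ℝ := fun ω => max (runMax M s ω - max Pbar (runMax M t ω)) 0 with hgdef
  have hmt : Measurable[ℱ t] (runMax M t) := runMax_measurable ℱ hM.stronglyAdapted.adapted hMcont ht htT
  have hmt0 : Measurable[m0] (runMax M t) := hmt.mono (ℱ.le t) le_rfl
  have hms0 : Measurable[m0] (runMax M s) :=
    (runMax_measurable ℱ hM.stronglyAdapted.adapted hMcont h0s hsT).mono (ℱ.le s) le_rfl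
  have hfm : StronglyMeasurable[ℱ t] f :=
    ((hmt.sub measurable_const).max measurable_const).stronglyMeasurable
  have hfi : Integrable f μ := by
    refine (hMint.add (integrable_const |Pbar|)).mono'
      ((hfm.mono (ℱ.le t)).aestronglyMeasurable) (ae_of_all _ fun ω => ?_)
    have h1 := habs_t ω
    have h2 := abs_le.1 h1
    have hnn : (0:ℝ) ≤ f ω := le_max_right _ _
    rw [Real.norm_eq_abs, abs_of_nonneg hnn]
    have h3 := neg_abs_le Pbar
    have h4 := le_abs_self Pbar
    simp only [Pi.add_apply]
    exact max_le (by linarith [h2.2]) (by linarith [hSnn ω, abs_nonneg Pbar])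
  have hgi : Integrable g μ := by
    refine (hMint.add ((integrable_const |Pbar|).add hMint)).mono'
      (((hms0.sub (measurable_const.max hmt0)).max measurable_const).aestronglyMeasurable)
      (ae_of_all _ fun ω => ?_)
    have h1 := abs_le.1 (habs_t ω)
    have h2 := abs_le.1 (habs_s ω)
    have hnn : (0:ℝ) ≤ g ω := le_max_right _ _
    rw [Real.norm_eq_abs, abs_of_nonneg hnn]
    have h3 : -(|Pbar| + S ω) ≤ max Pbar (runMax M t ω) :=
      le_trans (by linarith [neg_abs_le Pbar, hSnn ω]) (le_max_left _ _)
    simp only [Pi.add_apply]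
    exact max_le (by linarith) (by linarith [hSnn ω, abs_nonneg Pbar])
  have hdecomp : (fun ω => cappedPrice Pbar M s ω) = (M s - f) - g := by
    funext ω
    simp only [Pi.sub_apply, cappedPrice, hfdef, hgdef]
    have := max_sub_decomp (c := Pbar) (hmono ω)
    linarith
  have step1 : μ[fun ω => cappedPrice Pbar M s ω|ℱ t]
      =ᵐ[μ] (μ[M s|ℱ t] - μ[f|ℱ t]) - μ[g|ℱ t] := by
    rw [hdecomp]
    exact (condExp_sub ((hM.integrable s).sub hfi) hgi _).trans
      ((condExp_sub (hM.integrable s) hfi _).sub Filter.EventuallyEq.rfl)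
  have hMart : μ[M s|ℱ t] =ᵐ[μ] M t := hM.condExp_ae_eq hts
  have hffix : μ[f|ℱ t] = f := condExp_of_stronglyMeasurable (ℱ.le t) hfm hfi
  refine step1.trans ?_
  rw [hffix]
  filter_upwards [hMart] with ω hω
  simp only [Pi.sub_apply]
  rw [hω]
  rfl


end
end

section
/- Let Z be standard normally distributed (law gaussianReal 0 1 on ℝ), and let σ > 0, r > 0, K ≥ 0. Then E[(σ√r |Z| − K)⁺] = 2σ√r φ(K/(σ√r)) − 2K (1 − Φ(K/(σ√r))). -/
open MeasureTheory ProbabilityTheory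

noncomputable section

/-- The standard normal density `φ(x) = exp(−x²/2)/√(2π)`. -/
def stdNormalPdf (x : ℝ) : ℝ := Real.exp (-x ^ 2 / 2) / Real.sqrt (2 * Real.pi)

/-- The standard normal cumulative distribution function `Φ(x) = ∫_{−∞}^x φ(y) dy`. -/
def stdNormalCdf (x : ℝ) : ℝ := ∫ y in Set.Iic x, stdNormalPdf y

lemma stdNormalPdf_eq (x : ℝ) : stdNormalPdf x = gaussianPDFReal 0 1 x := by
  simp [stdNormalPdf, gaussianPDFReal, neg_div, mul_comm, div_eq_inv_mul]

lemma integrable_stdNormalPdf : Integrable stdNormalPdf := by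
  have h := integrable_gaussianPDFReal 0 1
  rw [show stdNormalPdf = gaussianPDFReal 0 1 from funext stdNormalPdf_eq]
  exact h

lemma integral_stdNormalPdf : ∫ x, stdNormalPdf x = 1 := by
  have h := integral_gaussianPDFReal_eq_one 0 one_ne_zero
  rw [show stdNormalPdf = gaussianPDFReal 0 1 from funext stdNormalPdf_eq]
  exact h

lemma integrable_mul_stdNormalPdf : Integrable (fun x => x * stdNormalPdf x) := by
  have h : Integrable (fun x : ℝ => x * Real.exp (-(1/2) * x ^ 2)) :=
    integrable_mul_exp_neg_mul_sq (by norm_num)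
  have : Integrable (fun x : ℝ => (x * Real.exp (-(1/2) * x ^ 2)) * (Real.sqrt (2 * Real.pi))⁻¹) :=
    h.mul_const _
  refine this.congr (Filter.Eventually.of_forall fun x => ?_)
  simp [stdNormalPdf, div_eq_mul_inv]
  ring_nf

lemma hasDerivAt_neg_stdNormalPdf (x : ℝ) :
    HasDerivAt (fun y => -stdNormalPdf y) (x * stdNormalPdf x) x := by
  have h1 : HasDerivAt (fun y : ℝ => -y ^ 2 / 2) (-x) x := by
    have : HasDerivAt (fun y : ℝ => y ^ 2) (2 * x) x := by
      simpa using (hasDerivAt_pow 2 x)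
    have := (this.neg).div_const 2
    refine this.congr_deriv ?_
    ring
  have h2 : HasDerivAt (fun y : ℝ => Real.exp (-y ^ 2 / 2))
      (Real.exp (-x ^ 2 / 2) * (-x)) x := h1.exp
  have h3 := (h2.div_const (Real.sqrt (2 * Real.pi))).neg
  refine h3.congr_deriv ?_
  simp [stdNormalPdf]
  ring

lemma tendsto_stdNormalPdf_atTop : Filter.Tendsto stdNormalPdf Filter.atTop (nhds 0) := by
  have h1 : Filter.Tendsto (fun x : ℝ => x ^ 2 / 2) Filter.atTop Filter.atTop :=
    (Filter.tendsto_pow_atTop two_ne_zero).atTop_div_const (by norm_num)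
  have h2 : Filter.Tendsto (fun x : ℝ => -x ^ 2 / 2) Filter.atTop Filter.atBot := by
    simp_rw [neg_div]
    exact Filter.tendsto_neg_atBot_iff.mpr h1
  have h3 : Filter.Tendsto (fun x : ℝ => Real.exp (-x ^ 2 / 2)) Filter.atTop (nhds 0) :=
    Real.tendsto_exp_atBot.comp h2
  have := h3.div_const (Real.sqrt (2 * Real.pi))
  simp only [zero_div] at this
  exact this

lemma integral_mul_stdNormalPdf_Ioi (b : ℝ) :
    ∫ x in Set.Ioi b, x * stdNormalPdf x = stdNormalPdf b := by
  have h := integral_Ioi_of_hasDerivAt_of_tendsto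
    (f := fun y => -stdNormalPdf y) (f' := fun x => x * stdNormalPdf x) (a := b) (m := 0)
    ?_ (fun x _ => hasDerivAt_neg_stdNormalPdf x)
    (integrable_mul_stdNormalPdf.integrableOn) ?_
  · simpa using h
  · exact ((hasDerivAt_neg_stdNormalPdf b).continuousAt).continuousWithinAt
  · simpa using tendsto_stdNormalPdf_atTop.neg

lemma integral_stdNormalPdf_Ioi (b : ℝ) :
    ∫ x in Set.Ioi b, stdNormalPdf x = 1 - stdNormalCdf b := by
  have hsplit : (∫ x in Set.Iic b, stdNormalPdf x) + ∫ x in Set.Ioi b, stdNormalPdf x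
      = ∫ x, stdNormalPdf x := by
    rw [← setIntegral_union (Set.Iic_disjoint_Ioi le_rfl) measurableSet_Ioi
      integrable_stdNormalPdf.integrableOn integrable_stdNormalPdf.integrableOn,
      Set.Iic_union_Ioi, setIntegral_univ]
  rw [integral_stdNormalPdf] at hsplit
  rw [stdNormalCdf]
  linarith

/-- for `Z` standard normal, `σ > 0`, `r > 0`, `K ≥ 0`,
`E[(σ√r |Z| − K)⁺] = 2σ√r φ(K/(σ√r)) − 2K (1 − Φ(K/(σ√r)))`
(the value of a fixed-strike lookback call in the Bachelier model). -/
theorem bachelier_lookback_value (σ r K : ℝ) (hσ : 0 < σ) (hr : 0 < r) (hK : 0 ≤ K) :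
    ∫ z, max (σ * Real.sqrt r * |z| - K) 0 ∂(gaussianReal 0 1)
      = 2 * σ * Real.sqrt r * stdNormalPdf (K / (σ * Real.sqrt r))
        - 2 * K * (1 - stdNormalCdf (K / (σ * Real.sqrt r))) := by
  set c := σ * Real.sqrt r with hc_def
  have hc : 0 < c := mul_pos hσ (Real.sqrt_pos.mpr hr)
  set b := K / c with hb_def
  have hb : 0 ≤ b := div_nonneg hK hc.le
  have hKcb : K = c * b := by
    rw [hb_def, mul_div_cancel₀ _ hc.ne']
  -- Step 1: move to Lebesgue integral with density
  have step1 : ∫ z, max (c * |z| - K) 0 ∂(gaussianReal 0 1)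
      = ∫ z, stdNormalPdf z * max (c * |z| - K) 0 := by
    rw [gaussianReal_of_var_ne_zero 0 one_ne_zero]
    have hf : Measurable fun x => (stdNormalPdf x).toNNReal := by
      have : Measurable stdNormalPdf := by
        rw [show stdNormalPdf = gaussianPDFReal 0 1 from funext stdNormalPdf_eq]
        exact measurable_gaussianPDFReal 0 1
      exact this.real_toNNReal
    have hpdf : gaussianPDF 0 1 = fun x => ((stdNormalPdf x).toNNReal : ENNReal) := by
      funext x
      rw [gaussianPDF, ← stdNormalPdf_eq, ENNReal.ofReal]
    rw [hpdf, integral_withDensity_eq_integral_smul hf]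
    refine integral_congr_ae (Filter.Eventually.of_forall fun z => ?_)
    have hnn : 0 ≤ stdNormalPdf z := by
      rw [stdNormalPdf_eq]; exact gaussianPDFReal_nonneg 0 1 z
    simp [NNReal.smul_def, Real.coe_toNNReal _ hnn]
  -- Step 2: evenness
  have step2 : ∫ z, stdNormalPdf z * max (c * |z| - K) 0
      = 2 * ∫ x in Set.Ioi (0:ℝ), stdNormalPdf x * max (c * x - K) 0 := by
    have heq : (fun z => stdNormalPdf z * max (c * |z| - K) 0)
        = fun z => (fun x => stdNormalPdf x * max (c * x - K) 0) |z| := by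
      funext z
      simp only [stdNormalPdf, sq_abs, abs_abs]
    rw [heq, integral_comp_abs (f := fun x => stdNormalPdf x * max (c * x - K) 0)]
  -- Step 3: drop the positive part
  have step3 : ∫ x in Set.Ioi (0:ℝ), stdNormalPdf x * max (c * x - K) 0
      = ∫ x in Set.Ioi b, stdNormalPdf x * (c * x - K) := by
    rw [show (∫ x in Set.Ioi (0:ℝ), stdNormalPdf x * max (c * x - K) 0)
        = ∫ x in Set.Ioi (0:ℝ),
            (Set.Ioi b).indicator (fun x => stdNormalPdf x * (c * x - K)) x from ?_,
      setIntegral_indicator measurableSet_Ioi, Set.Ioi_inter_Ioi, max_eq_right hb]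
    refine setIntegral_congr_fun measurableSet_Ioi fun x hx => ?_
    by_cases hxb : b < x
    · have : 0 ≤ c * x - K := by nlinarith
      rw [max_eq_left this, Set.indicator_of_mem (Set.mem_Ioi.mpr hxb)]
    · push_neg at hxb
      have : c * x - K ≤ 0 := by nlinarith
      rw [Set.indicator_of_notMem (by simpa using hxb), max_eq_right this, mul_zero]
  -- Step 4: compute
  have hint1 : IntegrableOn (fun x => c * (x * stdNormalPdf x)) (Set.Ioi b) :=
    (integrable_mul_stdNormalPdf.const_mul c).integrableOn
  have hint2 : IntegrableOn (fun x => K * stdNormalPdf x) (Set.Ioi b) :=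
    (integrable_stdNormalPdf.const_mul K).integrableOn
  have step4 : ∫ x in Set.Ioi b, stdNormalPdf x * (c * x - K)
      = c * stdNormalPdf b - K * (1 - stdNormalCdf b) := by
    have : ∀ x : ℝ, stdNormalPdf x * (c * x - K)
        = c * (x * stdNormalPdf x) - K * stdNormalPdf x := fun x => by ring
    simp_rw [this]
    rw [integral_sub hint1 hint2, integral_const_mul, integral_const_mul,
      integral_mul_stdNormalPdf_Ioi, integral_stdNormalPdf_Ioi]
  rw [step1, step2, step3, step4]
  ring

end
end

section
/- Fix 0 ≤ t < T, λ > 0, σ > 0, P̄ ∈ ℝ and p ∈ ℝ. Then the Bachelier barrier-induced trading rate with G = G_β converges in the low-inventory-cost limit: lim_{β → 0⁺} (1/(2λ)) ∫_t^T (σ/√(s−t)) (G_β(T−s)/G_β(T−t)) φ((P̄−p)/(σ√(s−t))) ds = (1/(2λ)) ∫_t^T (σ/√(s−t)) φ((P̄−p)/(σ√(s−t))) ds. -/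
open MeasureTheory intervalIntegral Filter

noncomputable section

/-- `G_β(s) = β cosh(β s) + β² sinh(β s)` (the case `γ = Γ`, `β = √(γ/λ)`). -/
def Gbeta (β s : ℝ) : ℝ := β * Real.cosh (β * s) + β ^ 2 * Real.sinh (β * s)

lemma stdNormalPdf_nonneg (x : ℝ) : 0 ≤ stdNormalPdf x :=
  div_nonneg (Real.exp_nonneg _) (Real.sqrt_nonneg _)

lemma stdNormalPdf_le (x : ℝ) : stdNormalPdf x ≤ (Real.sqrt (2 * Real.pi))⁻¹ := by
  rw [stdNormalPdf, div_eq_mul_inv]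
  have h1 : Real.exp (-x ^ 2 / 2) ≤ 1 := by
    rw [Real.exp_le_one_iff]; nlinarith [sq_nonneg x]
  have h2 : (0:ℝ) ≤ (Real.sqrt (2 * Real.pi))⁻¹ :=
    inv_nonneg.mpr (Real.sqrt_nonneg _)
  nlinarith

lemma Gbeta_pos {β b : ℝ} (hβ : 0 < β) (hb : 0 ≤ b) : 0 < Gbeta β b := by
  have h1 : 0 < Real.cosh (β * b) := Real.cosh_pos (β * b)
  have h2 : 0 ≤ Real.sinh (β * b) := by
    rw [Real.sinh_nonneg_iff]; positivity
  unfold Gbeta; nlinarith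

lemma Gbeta_ratio_mem {β a b : ℝ} (hβ : 0 < β) (ha : 0 ≤ a) (hab : a ≤ b) :
    Gbeta β a / Gbeta β b ∈ Set.Icc (0:ℝ) 1 := by
  have hb : 0 ≤ b := ha.trans hab
  have hden := Gbeta_pos hβ hb
  have hnum : 0 ≤ Gbeta β a := (Gbeta_pos hβ ha).le
  constructor
  · exact div_nonneg hnum hden.le
  · rw [div_le_one hden]
    have h1 : Real.cosh (β * a) ≤ Real.cosh (β * b) := by
      rw [Real.cosh_le_cosh, abs_of_nonneg (by positivity), abs_of_nonneg (by positivity)]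
      exact mul_le_mul_of_nonneg_left hab hβ.le
    have h2 : Real.sinh (β * a) ≤ Real.sinh (β * b) :=
      Real.sinh_le_sinh.mpr (mul_le_mul_of_nonneg_left hab hβ.le)
    unfold Gbeta; nlinarith [sq_nonneg β]

lemma Gbeta_ratio_tendsto (a b : ℝ) :
    Tendsto (fun β : ℝ => Gbeta β a / Gbeta β b) (nhdsWithin 0 (Set.Ioi 0)) (nhds 1) := by
  have key : ∀ β ∈ Set.Ioi (0:ℝ), (Real.cosh (β * a) + β * Real.sinh (β * a)) /
      (Real.cosh (β * b) + β * Real.sinh (β * b)) = Gbeta β a / Gbeta β b := by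
    intro β hβ
    have hβ' : (β : ℝ) ≠ 0 := ne_of_gt hβ
    unfold Gbeta
    rw [show β * Real.cosh (β * a) + β ^ 2 * Real.sinh (β * a)
        = β * (Real.cosh (β * a) + β * Real.sinh (β * a)) by ring,
      show β * Real.cosh (β * b) + β ^ 2 * Real.sinh (β * b)
        = β * (Real.cosh (β * b) + β * Real.sinh (β * b)) by ring,
      mul_div_mul_left _ _ hβ']
  have hcont : ContinuousAt (fun β : ℝ => (Real.cosh (β * a) + β * Real.sinh (β * a)) /
      (Real.cosh (β * b) + β * Real.sinh (β * b))) 0 := by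
    apply ContinuousAt.div
    · fun_prop
    · fun_prop
    · simp
  have h0 : Tendsto (fun β : ℝ => (Real.cosh (β * a) + β * Real.sinh (β * a)) /
      (Real.cosh (β * b) + β * Real.sinh (β * b))) (nhdsWithin 0 (Set.Ioi 0)) (nhds 1) := by
    have := hcont.tendsto
    simp only [zero_mul, Real.cosh_zero, Real.sinh_zero, mul_zero, add_zero, div_one] at this
    exact this.mono_left nhdsWithin_le_nhds
  exact h0.congr' (eventually_of_mem self_mem_nhdsWithin key)

/-- the Bachelier barrier-induced trading rate converges in the
low-inventory-cost limit `β → 0⁺` to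
`(1/(2λ)) ∫_t^T (σ/√(s−t)) φ((P̄−p)/(σ√(s−t))) ds`. -/
theorem uBA_low_cost_limit
    (T lam σ Pbar p t : ℝ) (ht : 0 ≤ t) (htT : t < T) (hlam : 0 < lam) (hσ : 0 < σ) :
    Tendsto
      (fun β : ℝ => (1 / (2 * lam)) * ∫ s in t..T,
        (σ / Real.sqrt (s - t)) * (Gbeta β (T - s) / Gbeta β (T - t))
          * stdNormalPdf ((Pbar - p) / (σ * Real.sqrt (s - t))))
      (nhdsWithin 0 (Set.Ioi 0))
      (nhds ((1 / (2 * lam)) * ∫ s in t..T,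
        (σ / Real.sqrt (s - t)) * stdNormalPdf ((Pbar - p) / (σ * Real.sqrt (s - t))))) := by
  apply Tendsto.const_mul
  have huIoc : Set.uIoc t T = Set.Ioc t T := Set.uIoc_of_le htT.le
  -- bound function
  set bound : ℝ → ℝ := fun s => σ * (s - t) ^ (-(2:ℝ)⁻¹) * (Real.sqrt (2 * Real.pi))⁻¹ with hbound
  apply intervalIntegral.tendsto_integral_filter_of_dominated_convergence bound
  · -- measurability
    filter_upwards [self_mem_nhdsWithin] with β (hβ : β ∈ Set.Ioi (0:ℝ))
    rw [huIoc]
    apply ContinuousOn.aestronglyMeasurable _ measurableSet_Ioc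
    apply ContinuousOn.mul
    apply ContinuousOn.mul
    · apply ContinuousOn.div continuousOn_const
      · fun_prop
      · intro s hs
        exact (Real.sqrt_pos.mpr (by simp at hs; linarith)).ne'
    · apply Continuous.continuousOn
      apply Continuous.div_const
      unfold Gbeta; fun_prop
    · have hcφ : Continuous stdNormalPdf := by
        unfold stdNormalPdf; fun_prop
      apply hcφ.comp_continuousOn
      apply ContinuousOn.div continuousOn_const
      · fun_prop
      · intro s hs
        have : (0:ℝ) < Real.sqrt (s - t) := Real.sqrt_pos.mpr (by simp at hs; linarith)
        positivity
  · -- bound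
    filter_upwards [self_mem_nhdsWithin] with β (hβ : β ∈ Set.Ioi (0:ℝ))
    filter_upwards with s hs
    rw [huIoc] at hs
    have hst : 0 < s - t := by simp at hs huIoc ⊢; linarith [hs.1]
    have hTs : 0 ≤ T - s := by simp at hs; linarith [hs.2]
    have hTt : T - s ≤ T - t := by linarith [hs.1]
    obtain ⟨hr0, hr1⟩ := Gbeta_ratio_mem (Set.mem_Ioi.mp hβ) hTs hTt
    have hsq : 0 < Real.sqrt (s - t) := Real.sqrt_pos.mpr hst
    have h1 : 0 ≤ σ / Real.sqrt (s - t) := by positivity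
    have hφ0 := stdNormalPdf_nonneg ((Pbar - p) / (σ * Real.sqrt (s - t)))
    have hφ1 := stdNormalPdf_le ((Pbar - p) / (σ * Real.sqrt (s - t)))
    rw [Real.norm_eq_abs, abs_of_nonneg (by positivity)]
    have hrw : bound s = σ / Real.sqrt (s - t) * (Real.sqrt (2 * Real.pi))⁻¹ := by
      have hx : (s - t) ^ (-(2:ℝ)⁻¹) = (Real.sqrt (s - t))⁻¹ := by
        rw [Real.sqrt_eq_rpow, ← Real.rpow_neg hst.le]; norm_num
      simp only [hbound]
      rw [hx, div_eq_mul_inv]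
    rw [hrw]
    calc σ / Real.sqrt (s - t) * (Gbeta β (T - s) / Gbeta β (T - t)) *
          stdNormalPdf ((Pbar - p) / (σ * Real.sqrt (s - t)))
        ≤ σ / Real.sqrt (s - t) * 1 * (Real.sqrt (2 * Real.pi))⁻¹ := by
          apply mul_le_mul _ hφ1 hφ0 (by positivity)
          exact mul_le_mul_of_nonneg_left hr1 h1
      _ = σ / Real.sqrt (s - t) * (Real.sqrt (2 * Real.pi))⁻¹ := by ring
  · -- bound integrable
    have h1 : IntervalIntegrable (fun s : ℝ => s ^ (-(2:ℝ)⁻¹)) volume 0 (T - t) :=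
      intervalIntegral.intervalIntegrable_rpow' (by norm_num)
    have h2 := (h1.comp_sub_right t)
    simp only [zero_add] at h2
    rw [sub_add_cancel] at h2
    exact (h2.const_mul σ).mul_const _
  · -- pointwise limit
    filter_upwards with s hs
    rw [huIoc] at hs
    have hratio := Gbeta_ratio_tendsto (T - s) (T - t)
    have := (hratio.const_mul (σ / Real.sqrt (s - t))).mul_const
      (stdNormalPdf ((Pbar - p) / (σ * Real.sqrt (s - t))))
    simpa using this

end
end
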